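/- arXiv:2402.09202 — 3 statements merged into one kernel-verified Lean document; each statement's English description precedes it below -/
import Mathlib

section
/- If (u_n) is a sequence of positive real numbers such that n(1 - u_{n-1}/u_n) → α as n → ∞, then for every τ > α the sequence (n^{-τ} u_n) is eventually (strictly) decreasing, and for every σ < α the sequence (n^{-σ} u_n) is eventually (strictly) increasing. -/
open Filter

/-- The auxiliary limit: (n+1)·(1 − (n/(n+1))^c) → c. -/
lemma aux_tendsto (c : ℝ) :
    Tendsto (fun n : ℕ => ((n : ℝ) + 1) * (1 - ((n : ℝ) / ((n : ℝ) + 1)) ^ c))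
      atTop (nhds c) := by
  -- derivative of (1-x)^c at 0 is -c
  have h2 : HasDerivAt (fun x : ℝ => 1 - x) (-1) 0 := by
    simpa using (hasDerivAt_id' (0:ℝ)).const_sub (1:ℝ)
  have h3 : HasDerivAt (fun x : ℝ => (1 - x) ^ c) (-c) (0 : ℝ) := by
    have := h2.rpow_const (p := c) (by norm_num)
    simpa [Real.one_rpow] using this
  have hslope : Tendsto (fun x : ℝ => ((1 - x) ^ c - 1) / x)
      (nhdsWithin 0 {(0:ℝ)}ᶜ) (nhds (-c)) := by
    have := hasDerivAt_iff_tendsto_slope.mp h3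
    simpa [slope_fun_def, Real.one_rpow, div_eq_inv_mul] using this
  have hslope' : Tendsto (fun x : ℝ => (1 - (1 - x) ^ c) / x)
      (nhdsWithin 0 {(0:ℝ)}ᶜ) (nhds c) := by
    have := hslope.neg
    simp only [neg_neg] at this
    convert this using 2 with x
    ring
  have hseq : Tendsto (fun n : ℕ => (1 : ℝ) / ((n : ℝ) + 1))
      atTop (nhdsWithin 0 {(0:ℝ)}ᶜ) := by
    apply tendsto_nhdsWithin_of_tendsto_nhds_of_eventually_within
    · exact tendsto_one_div_add_atTop_nhds_zero_nat
    · filter_upwards with n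
      have : (0:ℝ) < (n : ℝ) + 1 := by positivity
      simp only [Set.mem_compl_iff, Set.mem_singleton_iff]
      positivity
  have := hslope'.comp hseq
  refine this.congr fun n => ?_
  have hpos : (0:ℝ) < (n : ℝ) + 1 := by positivity
  have h1x : 1 - 1 / ((n : ℝ) + 1) = (n : ℝ) / ((n : ℝ) + 1) := by
    field_simp
    ring
  simp only [Function.comp, h1x]
  field_simp

/-- If n(1 - u_{n-1}/u_n) → α, then (n^{-τ} u_n) is eventually strictly decreasing for τ > α
and (n^{-σ} u_n) is eventually strictly increasing for σ < α. -/
theorem stmt_1 (u : ℕ → ℝ) (hu : ∀ n, 0 < u n) (α : ℝ)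
    (h : Tendsto (fun n : ℕ => (n : ℝ) * (1 - u (n - 1) / u n)) atTop (nhds α)) :
    (∀ τ : ℝ, α < τ → ∀ᶠ n : ℕ in atTop,
      ((n + 1 : ℕ) : ℝ) ^ (-τ) * u (n + 1) < (n : ℝ) ^ (-τ) * u n) ∧
    (∀ σ : ℝ, σ < α → ∀ᶠ n : ℕ in atTop,
      (n : ℝ) ^ (-σ) * u n < ((n + 1 : ℕ) : ℝ) ^ (-σ) * u (n + 1)) := by
  -- shifted version of the hypothesis
  have hv : Tendsto (fun n : ℕ => ((n : ℝ) + 1) * (1 - u n / u (n + 1)))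
      atTop (nhds α) := by
    have := h.comp (tendsto_add_atTop_nat 1)
    refine this.congr fun n => ?_
    simp [Function.comp]
  constructor
  · intro τ hτ
    have hlt := hv.eventually_lt (aux_tendsto τ) hτ
    filter_upwards [hlt, eventually_ge_atTop 1] with n hn hn1
    have ha : (0:ℝ) < (n : ℝ) := by exact_mod_cast hn1
    have hb : (0:ℝ) < (n : ℝ) + 1 := by positivity
    -- from hn : (n+1)(1 - u n/u(n+1)) < (n+1)(1 - (n/(n+1))^τ)
    have key : ((n : ℝ) / ((n : ℝ) + 1)) ^ τ < u n / u (n + 1) := by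
      have := (mul_lt_mul_iff_right₀ hb).mp hn
      linarith
    have hdiv : ((n : ℝ)) ^ τ / ((n : ℝ) + 1) ^ τ < u n / u (n + 1) := by
      rwa [Real.div_rpow ha.le hb.le] at key
    have haτ : (0:ℝ) < (n : ℝ) ^ τ := Real.rpow_pos_of_pos ha τ
    have hbτ : (0:ℝ) < ((n : ℝ) + 1) ^ τ := Real.rpow_pos_of_pos hb τ
    have hmul : (n : ℝ) ^ τ * u (n + 1) < u n * ((n : ℝ) + 1) ^ τ :=
      (div_lt_div_iff₀ hbτ (hu (n + 1))).mp hdiv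
    have : u (n + 1) / ((n : ℝ) + 1) ^ τ < u n / (n : ℝ) ^ τ :=
      (div_lt_div_iff₀ hbτ haτ).mpr (by linarith [hmul])
    push_cast
    rw [Real.rpow_neg hb.le, Real.rpow_neg ha.le]
    rw [inv_mul_eq_div, inv_mul_eq_div]
    exact this
  · intro σ hσ
    have hlt := (aux_tendsto σ).eventually_lt hv hσ
    filter_upwards [hlt, eventually_ge_atTop 1] with n hn hn1
    have ha : (0:ℝ) < (n : ℝ) := by exact_mod_cast hn1
    have hb : (0:ℝ) < (n : ℝ) + 1 := by positivity
    have key : u n / u (n + 1) < ((n : ℝ) / ((n : ℝ) + 1)) ^ σ := by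
      have := (mul_lt_mul_iff_right₀ hb).mp hn
      linarith
    have hdiv : u n / u (n + 1) < ((n : ℝ)) ^ σ / ((n : ℝ) + 1) ^ σ := by
      rwa [Real.div_rpow ha.le hb.le] at key
    have haσ : (0:ℝ) < (n : ℝ) ^ σ := Real.rpow_pos_of_pos ha σ
    have hbσ : (0:ℝ) < ((n : ℝ) + 1) ^ σ := Real.rpow_pos_of_pos hb σ
    have hmul : u n * ((n : ℝ) + 1) ^ σ < (n : ℝ) ^ σ * u (n + 1) :=
      (div_lt_div_iff₀ (hu (n + 1)) hbσ).mp hdiv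
    have : u n / (n : ℝ) ^ σ < u (n + 1) / ((n : ℝ) + 1) ^ σ :=
      (div_lt_div_iff₀ haσ hbσ).mpr (by linarith [hmul])
    push_cast
    rw [Real.rpow_neg hb.le, Real.rpow_neg ha.le]
    rw [inv_mul_eq_div, inv_mul_eq_div]
    exact this
end

section
/- Let (u_n) be a sequence of positive reals satisfying u_{n+1}/u_n = 1 + α/n + o(1/n) for some α > -1. Then (1/(n u_n)) ∑_{k=1}^n u_k → 1/(1+α) as n → ∞. -/
set_option maxHeartbeats 800000

open Filter
open Finset Asymptotics




lemma aux_harmonic (N : ℕ) :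
    Tendsto (fun n : ℕ => ∑ k ∈ Finset.Ico N n, (1 : ℝ) / k) atTop atTop := by
  have h0 : ¬ Summable (fun n : ℕ => (1 : ℝ) / n) := Real.not_summable_one_div_natCast
  have hpos : ∀ n : ℕ, 0 ≤ (1 : ℝ) / n := fun n => by positivity
  have h1 : Tendsto (fun n : ℕ => ∑ k ∈ Finset.range n, (1 : ℝ) / k) atTop atTop := by
    rwa [← not_summable_iff_tendsto_nat_atTop_of_nonneg hpos]
  have h2 := tendsto_atTop_add_const_right atTop (-(∑ k ∈ Finset.range N, (1 : ℝ) / k)) h1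
  refine (tendsto_congr' ?_).mp h2
  filter_upwards [Ici_mem_atTop N] with n hn
  rw [Finset.sum_Ico_eq_sub _ hn]; ring

lemma aux_b_atTop (u : ℕ → ℝ) (hu : ∀ n, 0 < u n) (c : ℝ) (hc : 0 < c) (N : ℕ) (hN : 1 ≤ N)
    (hstep : ∀ n, N ≤ n → c * u n ≤ ((n : ℝ) + 1) * u (n + 1) - (n : ℝ) * u n) :
    Tendsto (fun n : ℕ => (n : ℝ) * u n) atTop atTop := by
  set b : ℕ → ℝ := fun n => (n : ℝ) * u n with hb
  have hbN : 0 < b N := by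
    have : (0:ℝ) < N := by exact_mod_cast hN
    exact mul_pos this (hu N)
  have hmono : ∀ n, N ≤ n →
      b N ≤ b n ∧ b N * (1 + c * ∑ k ∈ Finset.Ico N n, (1 : ℝ) / k) ≤ b n := by
    intro n hn
    induction n with
    | zero => omega
    | succ m ih =>
      rcases Nat.lt_or_ge m N with hm | hm
      · have : m + 1 = N := by omega
        subst this
        simp
      · obtain ⟨ih1, ih2⟩ := ih hm
        have hmpos : (0:ℝ) < m := by
          have : 1 ≤ m := le_trans hN hm
          exact_mod_cast this
        have hst := hstep m hm
        have humb : c * (b N / m) ≤ c * u m := by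
          apply mul_le_mul_of_nonneg_left _ hc.le
          rw [div_le_iff₀ hmpos]
          calc b N ≤ b m := ih1
          _ = u m * m := by rw [hb]; ring
        have hstep' : b m + c * (b N / m) ≤ b (m + 1) := by
          have : b (m+1) = ((m:ℝ)+1) * u (m+1) := by rw [hb]; push_cast; ring
          rw [this]
          have : b m = (m:ℝ) * u m := rfl
          nlinarith
        constructor
        · have hq : 0 < b N / m := div_pos hbN hmpos
          have hq2 : 0 < c * (b N / m) := mul_pos hc hq
          calc b N ≤ b m := ih1
          _ ≤ b (m+1) := by linarith
        · rw [Finset.sum_Ico_succ_top hm]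
          calc b N * (1 + c * (∑ k ∈ Finset.Ico N m, (1:ℝ)/k + 1/m))
              = b N * (1 + c * ∑ k ∈ Finset.Ico N m, (1:ℝ)/k) + c * (b N / m) := by
                field_simp; ring
            _ ≤ b m + c * (b N / m) := by linarith
            _ ≤ b (m+1) := hstep'
  have hdiv := (tendsto_atTop_add_const_left atTop 1
      ((aux_harmonic N).const_mul_atTop hc)).const_mul_atTop hbN
  apply tendsto_atTop_mono' _ _ hdiv
  filter_upwards [Ici_mem_atTop N] with n hn
  exact (hmono n hn).2


/-- Cesàro characterization for regularly varying sequences of index α > -1. -/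
theorem stmt_2 (u : ℕ → ℝ) (hu : ∀ n, 0 < u n) (α : ℝ) (hα : -1 < α)
    (h : Tendsto (fun n : ℕ => (n : ℝ) * (u (n + 1) / u n - 1)) atTop (nhds α)) :
    Tendsto (fun n : ℕ => (∑ k ∈ Finset.Icc 1 n, u k) / ((n : ℝ) * u n)) atTop
      (nhds (1 / (1 + α))) := by
  have hune : ∀ n, u n ≠ 0 := fun n => (hu n).ne'
  have hα0 : (1 : ℝ) + α ≠ 0 := by linarith
  set t : ℕ → ℝ := fun n => (n : ℝ) * (u (n + 1) / u n - 1) with ht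
  set b : ℕ → ℝ := fun n => (n : ℝ) * u n with hb
  set L : ℝ := 1 / (1 + α) with hL
  have hinv : Tendsto (fun n : ℕ => (1 : ℝ) / n) atTop (nhds 0) :=
    tendsto_one_div_atTop_nhds_zero_nat
  -- ratio tends to 1
  have hratio : Tendsto (fun n : ℕ => u (n + 1) / u n) atTop (nhds 1) := by
    have h1 : Tendsto (fun n : ℕ => 1 + t n * (1 / n)) atTop (nhds (1 + α * 0)) :=
      tendsto_const_nhds.add (h.mul hinv)
    rw [mul_zero, add_zero] at h1
    refine (tendsto_congr' ?_).mp h1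
    filter_upwards [Ici_mem_atTop 1] with n hn
    have hn' : 1 ≤ n := hn
    have hn0 : (n : ℝ) ≠ 0 := Nat.cast_ne_zero.2 (by omega)
    rw [eq_div_iff (hune n), ht]
    field_simp [hune n]
    ring
  -- d n = (b (n+1) - b n)/u n tends to 1 + α
  have hd : Tendsto (fun n : ℕ => (b (n + 1) - b n) / u n) atTop (nhds (1 + α)) := by
    have h1 : Tendsto (fun n : ℕ => 1 + t n + t n * (1 / n)) atTop (nhds (1 + α + α * 0)) :=
      (tendsto_const_nhds.add h).add (h.mul hinv)
    rw [mul_zero, add_zero] at h1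
    refine (tendsto_congr' ?_).mp h1
    filter_upwards [Ici_mem_atTop 1] with n hn
    have hn' : 1 ≤ n := hn
    have hn0 : (n : ℝ) ≠ 0 := Nat.cast_ne_zero.2 (by omega)
    have hb1 : b (n + 1) = ((n : ℝ) + 1) * u (n + 1) := by rw [hb]; push_cast; ring
    rw [hb1, hb, eq_div_iff (hune n), ht]
    field_simp [hune n]
    ring
  set c : ℝ := (1 + α) / 2 with hcdef
  have hc : 0 < c := by rw [hcdef]; linarith
  -- choose N
  obtain ⟨N₁, hN₁⟩ := eventually_atTop.1 (hd.eventually (eventually_ge_nhds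
    (show c < 1 + α by rw [hcdef]; linarith)))
  set N : ℕ := max N₁ 1 with hNdef
  have hN1 : 1 ≤ N := le_max_right _ _
  have hstep : ∀ n, N ≤ n → c * u n ≤ b (n + 1) - b n := by
    intro n hn
    have := hN₁ n (le_trans (le_max_left _ _) hn)
    calc c * u n ≤ (b (n + 1) - b n) / u n * u n := by
          apply mul_le_mul_of_nonneg_right this (hu n).le
      _ = b (n + 1) - b n := div_mul_cancel₀ _ (hune n)
  have hbtop : Tendsto b atTop atTop := by
    apply aux_b_atTop u hu c hc N hN1
    intro n hn
    have := hstep n hn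
    have hb1 : b (n + 1) = ((n : ℝ) + 1) * u (n + 1) := by rw [hb]; push_cast; ring
    rw [hb1, hb] at this
    exact this
  -- the little-o machinery
  set g : ℕ → ℝ := fun n => b (n + N + 1) - b (n + N) with hg
  set f : ℕ → ℝ := fun n => u (n + N + 1) - L * g n with hf
  have hgpos : ∀ n, c * u (n + N) ≤ g n := fun n => hstep (n + N) (Nat.le_add_left _ _)
  have hgnn : ∀ n, 0 ≤ g n := fun n =>
    le_trans (mul_pos hc (hu _)).le (hgpos n)
  have hshift : Tendsto (fun n : ℕ => n + N) atTop atTop := tendsto_add_atTop_nat N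
  have hsum_g : ∀ n, ∑ i ∈ range n, g i = b (n + N) - b N := by
    intro n
    have := Finset.sum_range_sub (fun i => b (i + N)) n
    simp only [zero_add] at this
    rw [← this]
    apply Finset.sum_congr rfl
    intro i _
    have : i + 1 + N = i + N + 1 := by omega
    rw [this]
  have h'g : Tendsto (fun n => ∑ i ∈ range n, g i) atTop atTop := by
    have h0 := tendsto_atTop_add_const_right atTop (-(b N)) (hbtop.comp hshift)
    refine h0.congr fun n => ?_
    rw [hsum_g]
    simp [Function.comp, sub_eq_add_neg]
  have hfo : f =o[atTop] g := by
    have hs : Tendsto (fun n : ℕ => u (n + N + 1) / u (n + N)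
        - L * ((b (n + N + 1) - b (n + N)) / u (n + N))) atTop (nhds (1 - L * (1 + α))) := by
      have h1 := hratio.comp hshift
      have h2 := hd.comp hshift
      exact h1.sub (h2.const_mul L)
    have hz : (1 : ℝ) - L * (1 + α) = 0 := by rw [hL]; field_simp; ring
    rw [hz] at hs
    have hfu : f =o[atTop] fun n => u (n + N) := by
      rw [isLittleO_iff_tendsto (fun n hn => absurd hn (hune (n + N)))]
      refine (tendsto_congr ?_).mp hs
      intro n
      rw [hf, hg]
      field_simp [hune n]
    refine hfu.trans_isBigO ?_
    apply isBigO_of_le' (c := 1 / c)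
    intro n
    rw [Real.norm_eq_abs, Real.norm_eq_abs, abs_of_pos (hu _), abs_of_nonneg (hgnn n)]
    rw [div_mul_eq_mul_div, le_div_iff₀ hc, mul_comm]
    linarith [hgpos n]
  have hF := hfo.sum_range hgnn h'g
  -- F =o b∘shift
  have hFb : (fun n => ∑ i ∈ range n, f i) =o[atTop] fun n => b (n + N) := by
    refine hF.trans_isBigO ?_
    apply isBigO_of_le' (c := 1)
    intro n
    rw [hsum_g, one_mul, Real.norm_eq_abs, Real.norm_eq_abs]
    have hbN : 0 < b N := mul_pos (by exact_mod_cast hN1) (hu N)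
    have h1 : 0 ≤ b (n + N) - b N := by
      have := hsum_g n
      rw [← this]
      exact Finset.sum_nonneg (fun i _ => hgnn i)
    rw [abs_of_nonneg h1, abs_of_nonneg (by linarith)]
    linarith
  have hFtend : Tendsto (fun n => (∑ i ∈ range n, f i) / b (n + N)) atTop (nhds 0) :=
    hFb.tendsto_div_nhds_zero
  -- constant / b → 0
  have hconst : ∀ C : ℝ, Tendsto (fun n => C / b (n + N)) atTop (nhds 0) := by
    intro C
    have := (hbtop.comp hshift).inv_tendsto_atTop
    have h2 := this.const_mul C
    rw [mul_zero] at h2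
    exact h2.congr (fun n => by rw [div_eq_mul_inv]; rfl)
  -- sum decomposition
  set S : ℕ → ℝ := fun m => ∑ k ∈ Finset.Icc 1 m, u k with hS
  have hSdec : ∀ n : ℕ, S (n + N) = (∑ i ∈ range n, u (i + N + 1)) + S N := by
    intro n
    simp only [hS]
    have h1 : Finset.Icc 1 (n + N) = Finset.Icc 1 N ∪ Finset.Ico (N + 1) (n + N + 1) := by
      ext x
      simp [Finset.mem_Icc, Finset.mem_Ico, Finset.mem_union]
      omega
    rw [h1, Finset.sum_union]
    · rw [Finset.sum_Ico_eq_sum_range]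
      have : n + N + 1 - (N + 1) = n := by omega
      rw [this, add_comm]
      congr 1
      apply Finset.sum_congr rfl
      intro i _
      congr 1
      omega
    · rw [Finset.disjoint_left]
      intro x hx hx'
      simp [Finset.mem_Icc] at hx
      simp [Finset.mem_Ico] at hx'
      omega
  have hFeq : ∀ n, ∑ i ∈ range n, f i = (S (n + N) - S N) - L * (b (n + N) - b N) := by
    intro n
    rw [hf]
    simp only [Finset.sum_sub_distrib, ← Finset.mul_sum]
    rw [hsum_g, hSdec]
    ring
  -- conclude
  rw [← tendsto_add_atTop_iff_nat N]
  have hfinal : Tendsto (fun n : ℕ => L + ((∑ i ∈ range n, f i) + (S N - L * b N)) / b (n + N))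
      atTop (nhds (L + (0 + 0))) := by
    apply tendsto_const_nhds.add
    have := hFtend.add (hconst (S N - L * b N))
    refine this.congr (fun n => ?_)
    rw [← add_div]
  rw [add_zero, add_zero] at hfinal
  refine (tendsto_congr' ?_).mpr hfinal
  filter_upwards [Ici_mem_atTop 1] with n hn
  have hn' : 1 ≤ n := hn
  have hbne : b (n + N) ≠ 0 := by
    have h1 : (0:ℝ) < (↑(n + N) : ℝ) := by
      have : 0 < n + N := by omega
      exact_mod_cast this
    exact (mul_pos h1 (hu _)).ne'
  rw [hFeq]
  show S (n + N) / b (n + N)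
      = L + (S (n + N) - S N - L * (b (n + N) - b N) + (S N - L * b N)) / b (n + N)
  generalize hx : b (n + N) = x at hbne ⊢
  field_simp
  ring
end

section
/- Let (X_n) be adapted and square-integrable with E(X_{n+1}|ℱ_n) = (p/ν_n)Y_n and sup_n E(X_n²) < ∞, and suppose the martingale decomposition S_n = N_n + p η_n M_n holds with ∑_n n^{-2} E((ΔN_{n+1})² | ℱ_n) < ∞ a.s. and ∑_n (η_n/n)² E((ΔM_{n+1})² | ℱ_n) < ∞ a.s., with (n/η_n) eventually increasing to infinity. Then N_n/n → 0 and η_n M_n / n → 0 almost surely, hence S_n/n → 0 almost surely. -/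
open MeasureTheory Filter
open scoped NNReal ENNReal

/-- Kronecker's lemma, for an eventually monotone normalizing sequence tending to infinity. -/
lemma my_kronecker (b u : ℕ → ℝ) (L : ℝ) (N₁ : ℕ)
    (hmono : ∀ n, N₁ ≤ n → b n ≤ b (n + 1))
    (htop : Filter.Tendsto b atTop atTop)
    (hconv : Filter.Tendsto (fun n => ∑ k ∈ Finset.range n, (b k)⁻¹ * u k) atTop (nhds L)) :
    Filter.Tendsto (fun n => (∑ k ∈ Finset.range n, u k) / b n) atTop (nhds 0) := by
  set s : ℕ → ℝ := fun n => ∑ k ∈ Finset.range n, (b k)⁻¹ * u k with hs_def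
  set T : ℕ → ℝ := fun n => ∑ k ∈ Finset.range n, u k with hT_def
  rw [Metric.tendsto_atTop]
  intro ε hε
  set ε' : ℝ := ε / 4 with hε'_def
  have hε' : 0 < ε' := by positivity
  obtain ⟨N₂, hN₂⟩ := (htop.eventually_ge_atTop 1).exists_forall_of_atTop
  obtain ⟨N₃, hN₃⟩ := (Metric.tendsto_atTop.mp hconv) ε' hε'
  set N : ℕ := max (max N₁ N₂) N₃ with hN_def
  have hb1 : ∀ n, N ≤ n → 1 ≤ b n := fun n hn =>
    hN₂ n (le_trans (le_trans (le_max_right _ _) (le_max_left _ _)) hn)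
  have hbmono : ∀ n, N ≤ n → b n ≤ b (n + 1) := fun n hn =>
    hmono n (le_trans (le_trans (le_max_left _ _) (le_max_left _ _)) hn)
  have hsN : ∀ n, N ≤ n → |s n - L| < ε' := fun n hn =>
    by simpa [Real.dist_eq] using hN₃ n (le_trans (le_max_right _ _) hn)
  have hu : ∀ k, N ≤ k → u k = b k * (s (k + 1) - s k) := by
    intro k hk
    have hbk : b k ≠ 0 := by linarith [hb1 k hk]
    have : s (k + 1) - s k = (b k)⁻¹ * u k := by
      simp [hs_def, Finset.sum_range_succ]
    rw [this, ← mul_assoc, mul_inv_cancel₀ hbk, one_mul]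
  -- key induction
  have key : ∀ n, N ≤ n → |T (n + 1) - T N - b n * (s (n + 1) - L)| ≤ ε' * b n := by
    intro n hn
    induction n, hn using Nat.le_induction with
    | base =>
        have h1 : T (N + 1) - T N = u N := by simp [hT_def, Finset.sum_range_succ]
        have h2 : T (N + 1) - T N - b N * (s (N + 1) - L) = b N * (L - s N) := by
          rw [h1, hu N le_rfl]; ring
        rw [h2, abs_mul]
        have hbN : (0:ℝ) < b N := lt_of_lt_of_le one_pos (hb1 N le_rfl)
        have : |L - s N| ≤ ε' := by rw [abs_sub_comm]; exact (hsN N le_rfl).le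
        rw [abs_of_pos hbN]
        calc b N * |L - s N| ≤ b N * ε' := by nlinarith
          _ = ε' * b N := mul_comm _ _
    | succ n hn ih =>
        have e : T (n + 1 + 1) - T N - b (n + 1) * (s (n + 1 + 1) - L)
            = (T (n + 1) - T N - b n * (s (n + 1) - L))
              + (b n - b (n + 1)) * (s (n + 1) - L) := by
          have h1 : T (n + 1 + 1) = T (n + 1) + u (n + 1) := by
            simp [hT_def, Finset.sum_range_succ]
          rw [h1, hu (n + 1) (le_trans hn (Nat.le_succ n))]; ring
        rw [e]
        have h3 : |(b n - b (n + 1)) * (s (n + 1) - L)| ≤ (b (n + 1) - b n) * ε' := by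
          rw [abs_mul, abs_sub_comm, abs_of_nonneg (sub_nonneg.mpr (hbmono n hn))]
          have h4 : |s (n + 1) - L| ≤ ε' := (hsN (n + 1) (le_trans hn (Nat.le_succ n))).le
          nlinarith [sub_nonneg.mpr (hbmono n hn), abs_nonneg (s (n + 1) - L)]
        calc |(T (n + 1) - T N - b n * (s (n + 1) - L)) + (b n - b (n + 1)) * (s (n + 1) - L)|
            ≤ |T (n + 1) - T N - b n * (s (n + 1) - L)|
              + |(b n - b (n + 1)) * (s (n + 1) - L)| := abs_add_le _ _
          _ ≤ ε' * b n + (b (n + 1) - b n) * ε' := add_le_add ih h3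
          _ = ε' * b (n + 1) := by ring
  -- consequence: |T m| ≤ |T N| + 2 ε' * b m for m ≥ N + 1
  have key2 : ∀ m, N + 1 ≤ m → |T m| ≤ |T N| + 2 * ε' * b m := by
    intro m hm
    obtain ⟨n, hn, rfl⟩ : ∃ n, N ≤ n ∧ m = n + 1 := by
      refine ⟨m - 1, ?_, ?_⟩ <;> omega
    have h1 := key n hn
    have hsn : |s (n + 1) - L| ≤ ε' := (hsN (n + 1) (le_trans hn (Nat.le_succ n))).le
    have hbn : (0:ℝ) < b n := lt_of_lt_of_le one_pos (hb1 n hn)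
    have hbn1 : b n ≤ b (n + 1) := hbmono n hn
    have h2 : |T (n + 1) - T N| ≤ 2 * ε' * b n := by
      have := abs_mul (b n) (s (n + 1) - L)
      calc |T (n + 1) - T N|
          = |(T (n + 1) - T N - b n * (s (n + 1) - L)) + b n * (s (n + 1) - L)| := by ring_nf
        _ ≤ |T (n + 1) - T N - b n * (s (n + 1) - L)| + |b n * (s (n + 1) - L)| := abs_add_le _ _
        _ ≤ ε' * b n + b n * ε' := by
            refine add_le_add h1 ?_
            rw [abs_mul, abs_of_pos hbn]; nlinarith
        _ = 2 * ε' * b n := by ring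
    calc |T (n + 1)| ≤ |T N| + |T (n + 1) - T N| := by
          have := abs_add_le (T N) (T (n + 1) - T N); simpa using this
      _ ≤ |T N| + 2 * ε' * b n := by linarith
      _ ≤ |T N| + 2 * ε' * b (n + 1) := by nlinarith
  -- finish
  obtain ⟨N₄, hN₄⟩ := (htop.eventually_ge_atTop ((|T N| + 1) / ε')).exists_forall_of_atTop
  refine ⟨max (N + 1) N₄, fun n hn => ?_⟩
  have hn1 : N + 1 ≤ n := le_trans (le_max_left _ _) hn
  have hn4 : N₄ ≤ n := le_trans (le_max_right _ _) hn
  have hbn : (0:ℝ) < b n := lt_of_lt_of_le one_pos (hb1 n (le_trans (Nat.le_succ N) hn1))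
  have hbig : (|T N| + 1) / ε' ≤ b n := hN₄ n hn4
  have h5 : |T N| / b n < ε' := by
    rw [div_lt_iff₀ hbn]
    have : |T N| + 1 ≤ ε' * b n := by
      rw [div_le_iff₀ hε'] at hbig; linarith
    linarith
  rw [Real.dist_eq, sub_zero, abs_div, abs_of_pos hbn]
  calc |T n| / b n ≤ (|T N| + 2 * ε' * b n) / b n := by
        gcongr
        exact key2 n hn1
    _ = |T N| / b n + 2 * ε' := by field_simp
    _ < ε' + 2 * ε' := by linarith
    _ < ε := by rw [hε'_def]; linarith

lemma my_int_mul {Ω : Type*} {m0 : MeasurableSpace Ω} {P : Measure Ω} {f g : Ω → ℝ}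
    (hf : MemLp f 2 P) (hg : MemLp g 2 P) :
    Integrable (fun ω => f ω * g ω) P := by
  refine Integrable.mono' ((hf.integrable_sq.add hg.integrable_sq).div_const 2)
    (hf.aestronglyMeasurable.mul hg.aestronglyMeasurable)
    (Filter.Eventually.of_forall fun ω => ?_)
  simp only [Pi.add_apply, Pi.div_apply]
  rw [Real.norm_eq_abs, abs_mul]
  nlinarith [sq_abs (f ω), sq_abs (g ω), sq_nonneg (|f ω| - |g ω|), abs_nonneg (f ω),
    abs_nonneg (g ω)]

lemma my_sum_ite_le (a : ℕ → ℝ) (K : ℝ) (hK : 0 ≤ K) (ha : ∀ k, 0 ≤ a k) (n : ℕ) :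
    ∑ k ∈ Finset.range n, (if (∑ j ∈ Finset.range (k + 1), a j) ≤ K then a k else 0) ≤ K := by
  have main : ∀ m, (∑ k ∈ Finset.range m,
      (if (∑ j ∈ Finset.range (k + 1), a j) ≤ K then a k else 0))
        ≤ min (∑ j ∈ Finset.range m, a j) K := by
    intro m
    induction m with
    | zero => simp [hK]
    | succ m ih =>
        rw [Finset.sum_range_succ]
        by_cases h : (∑ j ∈ Finset.range (m + 1), a j) ≤ K
        · rw [if_pos h]
          have h1 : min (∑ j ∈ Finset.range m, a j) K = ∑ j ∈ Finset.range m, a j := by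
            apply min_eq_left
            calc ∑ j ∈ Finset.range m, a j ≤ ∑ j ∈ Finset.range (m + 1), a j := by
                  rw [Finset.sum_range_succ]; linarith [ha m]
              _ ≤ K := h
          rw [h1] at ih
          have h2 : min (∑ j ∈ Finset.range (m + 1), a j) K
              = ∑ j ∈ Finset.range (m + 1), a j := min_eq_left h
          rw [h2, Finset.sum_range_succ]
          linarith
        · rw [if_neg h, add_zero]
          refine le_trans ih (min_le_min ?_ le_rfl)
          rw [Finset.sum_range_succ]; linarith [ha m]
  exact le_trans (main n) (min_le_right _ _)

/-- Hall–Heyde-type convergence: for a square-integrable martingale `M` and deterministic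
coefficients `c`, if the weighted conditional variances are a.s. summable then the weighted
sum of martingale increments converges a.s. -/
lemma my_mart_conv {Ω : Type*} {m0 : MeasurableSpace Ω} (P : Measure Ω) [IsProbabilityMeasure P]
    (ℱ : MeasureTheory.Filtration ℕ m0) (M : ℕ → Ω → ℝ)
    (hM : MeasureTheory.Martingale M ℱ P) (hL2 : ∀ n, MeasureTheory.MemLp (M n) 2 P)
    (c : ℕ → ℝ)
    (hsum : ∀ᵐ ω ∂P, Summable (fun n : ℕ => c n ^ 2 *
        (P[(fun ω' => (M (n + 1) ω' - M n ω') ^ 2) | ℱ n]) ω)) :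
    ∀ᵐ ω ∂P, ∃ L : ℝ, Tendsto (fun n => ∑ k ∈ Finset.range n, c k * (M (k + 1) ω - M k ω))
      atTop (nhds L) := by
  -- the martingale differences
  set d : ℕ → Ω → ℝ := fun n ω => M (n + 1) ω - M n ω with hd_def
  have hd2 : ∀ n, MemLp (d n) 2 P := fun n => (hL2 (n + 1)).sub (hL2 n)
  -- conditional variances
  set h : ℕ → Ω → ℝ := fun n => P[(fun ω' => (M (n + 1) ω' - M n ω') ^ 2) | ℱ n] with hh_def
  have hmeas_h : ∀ n, StronglyMeasurable[ℱ n] (h n) := fun n => stronglyMeasurable_condExp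
  have hint_h : ∀ n, Integrable (h n) P := fun n => integrable_condExp
  have hnn : ∀ n, 0 ≤ᵐ[P] h n := fun n =>
    condExp_nonneg (Filter.Eventually.of_forall fun ω => sq_nonneg _)
  -- conditional expectation of increments vanishes
  have hcond0 : ∀ n, P[d n | ℱ n] =ᵐ[P] 0 := by
    intro n
    have h1 : P[d n | ℱ n] =ᵐ[P] P[M (n + 1) | ℱ n] - P[M n | ℱ n] := by
      have := condExp_sub (m := ℱ n) (μ := P) (hM.integrable (n + 1)) (hM.integrable n)
      exact this
    have h2 : P[M (n + 1) | ℱ n] =ᵐ[P] M n := hM.condExp_ae_eq (Nat.le_succ n)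
    have h3 : P[M n | ℱ n] = M n :=
      condExp_of_stronglyMeasurable (ℱ.le n) (hM.stronglyAdapted n) (hM.integrable n)
    filter_upwards [h1, h2] with ω hω1 hω2
    simp only [Pi.sub_apply, Pi.zero_apply] at *
    rw [hω1, hω2, h3]
    ring
  -- partial sums of weighted conditional variances
  set A : ℕ → Ω → ℝ := fun n ω => ∑ k ∈ Finset.range n, c k ^ 2 * h k ω with hA_def
  -- convergence result for each truncation level K
  have key : ∀ K : ℕ, ∀ᵐ ω ∂P, ∃ L : ℝ, Tendsto (fun n => ∑ k ∈ Finset.range n,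
      (if A (k + 1) ω ≤ (K : ℝ) then c k else 0) * d k ω) atTop (nhds L) := by
    intro K
    set ξ : ℕ → Ω → ℝ := fun k ω => if A (k + 1) ω ≤ (K : ℝ) then c k else 0 with hξ_def
    have hAmeas : ∀ k, StronglyMeasurable[ℱ k] (A (k + 1)) := by
      intro k
      apply Finset.stronglyMeasurable_fun_sum
      intro j hj
      have hjk : j ≤ k := Nat.lt_succ_iff.mp (Finset.mem_range.mp hj)
      exact (stronglyMeasurable_const.mul ((hmeas_h j).mono (ℱ.mono hjk)))
    have hξmeas : ∀ k, StronglyMeasurable[ℱ k] (ξ k) := by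
      intro k
      have : ξ k = Set.indicator {ω | A (k + 1) ω ≤ (K : ℝ)} (fun _ => c k) := by
        funext ω
        simp [hξ_def, Set.indicator_apply, Set.mem_setOf_eq]
      rw [this]
      exact stronglyMeasurable_const.indicator
        (measurableSet_le (hAmeas k).measurable measurable_const)
    have hξbdd : ∀ k ω, |ξ k ω| ≤ |c k| := by
      intro k ω
      simp only [hξ_def]
      split <;> simp [abs_nonneg]
    -- the truncated process
    set W : ℕ → Ω → ℝ := fun n ω => ∑ k ∈ Finset.range n, ξ k ω * d k ω with hW_def
    have hF2 : ∀ k, MemLp (fun ω => ξ k ω * d k ω) 2 P := by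
      intro k
      refine MemLp.of_le ((hd2 k).const_mul |c k|)
        ((((hξmeas k).mono (ℱ.le k)).aestronglyMeasurable).mul (hd2 k).aestronglyMeasurable)
        (Filter.Eventually.of_forall fun ω => ?_)
      rw [Real.norm_eq_abs, Real.norm_eq_abs, abs_mul, abs_mul, abs_abs]
      exact mul_le_mul_of_nonneg_right (hξbdd k ω) (abs_nonneg _)
    have hWL2 : ∀ n, MemLp (W n) 2 P := by
      intro n
      have he : (∑ i ∈ Finset.range n, fun ω => ξ i ω * d i ω) = W n := by
        funext ω; simp [hW_def]
      rw [← he]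
      exact memLp_finset_sum' (Finset.range n) (fun k _ => hF2 k)
    have hWadp : StronglyAdapted ℱ W := by
      intro n
      apply Finset.stronglyMeasurable_fun_sum
      intro k hk
      have hk' : k < n := Finset.mem_range.mp hk
      exact ((hξmeas k).mono (ℱ.mono hk'.le)).mul
        (((hM.stronglyAdapted.stronglyMeasurable_le (Nat.succ_le_of_lt hk')).sub
          (hM.stronglyAdapted.stronglyMeasurable_le hk'.le)))
    have hWint : ∀ n, Integrable (W n) P := fun n => (hWL2 n).integrable one_le_two
    -- W is a martingale
    have hWmart : Martingale W ℱ P := by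
      refine martingale_of_condExp_sub_eq_zero_nat hWadp hWint fun n => ?_
      have hdiff : W (n + 1) - W n = fun ω => ξ n ω * d n ω := by
        funext ω
        simp [hW_def, Finset.sum_range_succ]
      rw [hdiff]
      have hmul : P[(fun ω => ξ n ω * d n ω) | ℱ n] =ᵐ[P] fun ω => ξ n ω * (P[d n | ℱ n]) ω := by
        exact condExp_mul_of_stronglyMeasurable_left (μ := P) (hξmeas n)
          ((hF2 n).integrable one_le_two) ((hd2 n).integrable one_le_two)
      refine hmul.trans ?_
      filter_upwards [hcond0 n] with ω hω
      simp only [Pi.zero_apply] at hω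
      simp [hω]
    -- integrability of the weighted conditional variances
    have hsq_int : ∀ n, Integrable (fun ω => ξ n ω ^ 2 * h n ω) P := by
      intro n
      have hmeasξ2 : StronglyMeasurable[ℱ n] (fun ω => ξ n ω ^ 2) := by
        have e : (fun ω => ξ n ω ^ 2) = fun ω => ξ n ω * ξ n ω := by funext ω; ring
        rw [e]; exact (hξmeas n).mul (hξmeas n)
      have hbd : ∃ C, ∀ ω, ‖ξ n ω ^ 2‖ ≤ C := by
        refine ⟨c n ^ 2, fun ω => ?_⟩
        rw [Real.norm_eq_abs, abs_pow]
        have := hξbdd n ω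
        nlinarith [abs_nonneg (ξ n ω), abs_nonneg (c n), sq_abs (c n)]
      exact (hint_h n).bdd_mul (hmeasξ2.mono (ℱ.le n)).aestronglyMeasurable (ae_of_all _ hbd.choose_spec)
    have hApart_int : ∀ n, Integrable (fun ω => ∑ k ∈ Finset.range n, ξ k ω ^ 2 * h k ω) P :=
      fun n => integrable_finset_sum _ (fun k _ => hsq_int k)
    -- cross terms vanish
    have hcross : ∀ n, ∫ ω, W n ω * (ξ n ω * d n ω) ∂P = 0 := by
      intro n
      have hG2 : MemLp (fun ω => W n ω * ξ n ω) 2 P := by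
        refine MemLp.of_le ((hWL2 n).const_mul |c n|)
          (((hWadp n).mono (ℱ.le n)).aestronglyMeasurable.mul
            ((hξmeas n).mono (ℱ.le n)).aestronglyMeasurable)
          (Filter.Eventually.of_forall fun ω => ?_)
        rw [Real.norm_eq_abs, Real.norm_eq_abs, abs_mul, abs_mul, abs_abs, mul_comm (|c n|)]
        exact mul_le_mul_of_nonneg_left (hξbdd n ω) (abs_nonneg _)
      have hGmeas : StronglyMeasurable[ℱ n] (fun ω => W n ω * ξ n ω) :=
        (hWadp n).mul (hξmeas n)
      have hint1 : Integrable (fun ω => (W n ω * ξ n ω) * d n ω) P := my_int_mul hG2 (hd2 n)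
      have h1 : ∫ ω, W n ω * (ξ n ω * d n ω) ∂P = ∫ ω, (W n ω * ξ n ω) * d n ω ∂P := by
        congr 1; funext ω; ring
      have h2 : ∫ ω, (W n ω * ξ n ω) * d n ω ∂P
          = ∫ ω, (P[(fun ω' => (W n ω' * ξ n ω') * d n ω') | ℱ n]) ω ∂P :=
        (integral_condExp (ℱ.le n)).symm
      have h3 : P[(fun ω' => (W n ω' * ξ n ω') * d n ω') | ℱ n]
          =ᵐ[P] fun ω => (W n ω * ξ n ω) * (P[d n | ℱ n]) ω :=
        condExp_mul_of_stronglyMeasurable_left (μ := P) hGmeas hint1 ((hd2 n).integrable one_le_two)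
      have h4 : (fun ω => (W n ω * ξ n ω) * (P[d n | ℱ n]) ω) =ᵐ[P] fun _ => (0 : ℝ) := by
        filter_upwards [hcond0 n] with ω hω
        simp only [Pi.zero_apply] at hω
        simp [hω]
      rw [h1, h2, integral_congr_ae (h3.trans h4), integral_const]
      simp
    -- the third term
    have hthird : ∀ n, ∫ ω, (ξ n ω * d n ω) ^ 2 ∂P = ∫ ω, ξ n ω ^ 2 * h n ω ∂P := by
      intro n
      have hmeasξ2 : StronglyMeasurable[ℱ n] (fun ω => ξ n ω ^ 2) := by
        have e : (fun ω => ξ n ω ^ 2) = fun ω => ξ n ω * ξ n ω := by funext ω; ring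
        rw [e]; exact (hξmeas n).mul (hξmeas n)
      have hbd : ∃ C, ∀ ω, ‖ξ n ω ^ 2‖ ≤ C := by
        refine ⟨c n ^ 2, fun ω => ?_⟩
        rw [Real.norm_eq_abs, abs_pow]
        have := hξbdd n ω
        nlinarith [abs_nonneg (ξ n ω), abs_nonneg (c n), sq_abs (c n)]
      have hint2 : Integrable (fun ω => ξ n ω ^ 2 * d n ω ^ 2) P :=
        ((hd2 n).integrable_sq).bdd_mul (hmeasξ2.mono (ℱ.le n)).aestronglyMeasurable (ae_of_all _ hbd.choose_spec)
      have e1 : ∫ ω, (ξ n ω * d n ω) ^ 2 ∂P = ∫ ω, ξ n ω ^ 2 * d n ω ^ 2 ∂P := by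
        congr 1; funext ω; ring
      have h2 : ∫ ω, ξ n ω ^ 2 * d n ω ^ 2 ∂P
          = ∫ ω, (P[(fun ω' => ξ n ω' ^ 2 * d n ω' ^ 2) | ℱ n]) ω ∂P :=
        (integral_condExp (ℱ.le n)).symm
      have h3 : P[(fun ω' => ξ n ω' ^ 2 * d n ω' ^ 2) | ℱ n]
          =ᵐ[P] fun ω => ξ n ω ^ 2 * (P[(fun ω' => d n ω' ^ 2) | ℱ n]) ω :=
        condExp_mul_of_stronglyMeasurable_left (μ := P) hmeasξ2 hint2 ((hd2 n).integrable_sq)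
      have h5 : P[(fun ω' => d n ω' ^ 2) | ℱ n] = h n := rfl
      rw [e1, h2, integral_congr_ae h3, h5]
    -- second moment bound by induction
    have hWsq : ∀ n, ∫ ω, W n ω ^ 2 ∂P
        ≤ ∫ ω, (∑ k ∈ Finset.range n, ξ k ω ^ 2 * h k ω) ∂P := by
      intro n
      induction n with
      | zero => simp [hW_def]
      | succ n ih =>
          have expand : (fun ω => W (n + 1) ω ^ 2)
              = fun ω => W n ω ^ 2 + (2 * (W n ω * (ξ n ω * d n ω)) + (ξ n ω * d n ω) ^ 2) := by
            funext ω
            simp only [hW_def, Finset.sum_range_succ]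
            ring
          have i1 : Integrable (fun ω => W n ω ^ 2) P := (hWL2 n).integrable_sq
          have i2 : Integrable (fun ω => W n ω * (ξ n ω * d n ω)) P :=
            my_int_mul (hWL2 n) (hF2 n)
          have i3 : Integrable (fun ω => (ξ n ω * d n ω) ^ 2) P := (hF2 n).integrable_sq
          calc ∫ ω, W (n + 1) ω ^ 2 ∂P
              = ∫ ω, (W n ω ^ 2 + (2 * (W n ω * (ξ n ω * d n ω)) + (ξ n ω * d n ω) ^ 2)) ∂P := by
                rw [expand]
            _ = (∫ ω, W n ω ^ 2 ∂P) + ((∫ ω, 2 * (W n ω * (ξ n ω * d n ω)) ∂P)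
                  + ∫ ω, (ξ n ω * d n ω) ^ 2 ∂P) := by
                have i2' : Integrable (fun ω => 2 * (W n ω * (ξ n ω * d n ω))) P :=
                  i2.const_mul 2
                have ig : Integrable
                    (fun ω => 2 * (W n ω * (ξ n ω * d n ω)) + (ξ n ω * d n ω) ^ 2) P :=
                  i2'.add i3
                rw [integral_add i1 ig, integral_add i2' i3]
            _ = (∫ ω, W n ω ^ 2 ∂P) + ∫ ω, ξ n ω ^ 2 * h n ω ∂P := by
                rw [integral_const_mul, hcross n, hthird n]; ring
            _ ≤ (∫ ω, (∑ k ∈ Finset.range n, ξ k ω ^ 2 * h k ω) ∂P)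
                  + ∫ ω, ξ n ω ^ 2 * h n ω ∂P := by linarith
            _ = ∫ ω, (∑ k ∈ Finset.range (n + 1), ξ k ω ^ 2 * h k ω) ∂P := by
                rw [← integral_add (hApart_int n) (hsq_int n)]
                congr 1; funext ω; rw [Finset.sum_range_succ]
    -- a.e. pointwise bound on the variance partial sums
    have hptbd : ∀ᵐ ω ∂P, ∀ n, (∑ k ∈ Finset.range n, ξ k ω ^ 2 * h k ω) ≤ (K : ℝ) := by
      filter_upwards [ae_all_iff.2 hnn] with ω hω
      intro n
      have e : ∀ k, ξ k ω ^ 2 * h k ω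
          = (if (∑ j ∈ Finset.range (k + 1), c j ^ 2 * h j ω) ≤ (K : ℝ)
              then c k ^ 2 * h k ω else 0) := by
        intro k
        simp only [hξ_def, hA_def]
        split <;> simp
      rw [Finset.sum_congr rfl (fun k _ => e k)]
      exact my_sum_ite_le (fun j => c j ^ 2 * h j ω) K (Nat.cast_nonneg K)
        (fun k => mul_nonneg (sq_nonneg _) (hω k)) n
    have hWbd : ∀ n, ∫ ω, W n ω ^ 2 ∂P ≤ (K : ℝ) := by
      intro n
      refine le_trans (hWsq n) ?_
      have := integral_mono_ae (hApart_int n) (integrable_const (K : ℝ))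
        (hptbd.mono fun ω hω => hω n)
      simpa using this
    -- L¹ bound
    have hL1bd : ∀ n, eLpNorm (W n) 1 P ≤ (((K : ℝ≥0) + 1) / 2 : ℝ≥0) := by
      intro n
      have hb : ∀ ω, ‖W n ω‖ ≤ (W n ω ^ 2 + 1) / 2 := by
        intro ω
        rw [Real.norm_eq_abs]
        nlinarith [sq_nonneg (|W n ω| - 1), sq_abs (W n ω), abs_nonneg (W n ω)]
      have h1 : ∫ ω, ‖W n ω‖ ∂P ≤ ((K : ℝ) + 1) / 2 := by
        calc ∫ ω, ‖W n ω‖ ∂P ≤ ∫ ω, (W n ω ^ 2 + 1) / 2 ∂P :=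
              integral_mono (hWint n).norm
                (((hWL2 n).integrable_sq.add (integrable_const 1)).div_const 2) hb
          _ = ((∫ ω, W n ω ^ 2 ∂P) + 1) / 2 := by
              rw [integral_div, integral_add ((hWL2 n).integrable_sq) (integrable_const 1),
                integral_const]
              simp
          _ ≤ ((K : ℝ) + 1) / 2 := by linarith [hWbd n]
      have h2 : eLpNorm (W n) 1 P = ENNReal.ofReal (∫ ω, ‖W n ω‖ ∂P) := by
        rw [eLpNorm_one_eq_lintegral_enorm, ← ofReal_integral_norm_eq_lintegral_enorm (hWint n)]
      rw [h2]
      calc ENNReal.ofReal (∫ ω, ‖W n ω‖ ∂P) ≤ ENNReal.ofReal (((K : ℝ) + 1) / 2) :=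
            ENNReal.ofReal_le_ofReal h1
        _ = ((((K : ℝ≥0) + 1) / 2 : ℝ≥0) : ℝ≥0∞) := by
            rw [← ENNReal.ofReal_coe_nnreal]
            push_cast
            norm_num
    exact hWmart.submartingale.exists_ae_tendsto_of_bdd hL1bd
  -- combine over all truncation levels
  filter_upwards [ae_all_iff.2 key, hsum, ae_all_iff.2 hnn] with ω hkey hsumω hnnω
  set t : ℝ := ∑' n, c n ^ 2 * h n ω with ht_def
  have hterm : ∀ n, 0 ≤ c n ^ 2 * h n ω := fun n => mul_nonneg (sq_nonneg _) (hnnω n)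
  set K : ℕ := ⌈t⌉₊ with hK_def
  have hcondK : ∀ k, A (k + 1) ω ≤ (K : ℝ) := by
    intro k
    calc A (k + 1) ω = ∑ j ∈ Finset.range (k + 1), c j ^ 2 * h j ω := rfl
      _ ≤ t := Summable.sum_le_tsum _ (fun j _ => hterm j) hsumω
      _ ≤ (K : ℝ) := Nat.le_ceil t
  obtain ⟨L, hL⟩ := hkey K
  refine ⟨L, ?_⟩
  have heq : ∀ n, ∑ k ∈ Finset.range n, (if A (k + 1) ω ≤ (K : ℝ) then c k else 0) * d k ω
      = ∑ k ∈ Finset.range n, c k * d k ω :=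
    fun n => Finset.sum_congr rfl fun k _ => by rw [if_pos (hcondK k)]
  exact hL.congr heq

/-- Strong law of large numbers for the amnesic step-reinforced random walk, via the
martingale decomposition S_n = N_n + p η_n M_n and the martingale strong law. -/
theorem stmt_14 {Ω : Type*} {m0 : MeasurableSpace Ω} (P : Measure Ω) [IsProbabilityMeasure P]
    (ℱ : MeasureTheory.Filtration ℕ m0)
    (p : ℝ) (hp : p ∈ Set.Ioo (0 : ℝ) 1)
    (μ : ℕ → ℝ) (hμ : ∀ n ≥ 1, 0 < μ n)
    (ν : ℕ → ℝ) (hν : ∀ n, ν n = ∑ k ∈ Finset.Icc 1 n, μ k)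
    (X : ℕ → Ω → ℝ) (hadapted : MeasureTheory.StronglyAdapted ℱ X)
    (hL2 : ∀ n, MeasureTheory.MemLp (X n) 2 P)
    (hbdd : ∃ C : ℝ, ∀ n, ∫ ω, (X n ω) ^ 2 ∂P ≤ C)
    (Y : ℕ → Ω → ℝ) (hY : ∀ n ω, Y n ω = ∑ k ∈ Finset.Icc 1 n, μ k * X k ω)
    (hcond : ∀ n ≥ 1, P[X (n + 1) | ℱ n] =ᵐ[P] fun ω => (p / ν n) * Y n ω)
    (η : ℕ → ℝ) (hηpos : ∀ n ≥ 2, 0 < η n)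
    (M N S : ℕ → Ω → ℝ)
    (hMmart : MeasureTheory.Martingale M ℱ P) (hNmart : MeasureTheory.Martingale N ℱ P)
    (hML2 : ∀ n, MeasureTheory.MemLp (M n) 2 P)
    (hNL2 : ∀ n, MeasureTheory.MemLp (N n) 2 P)
    (hS : ∀ n ω, S n ω = ∑ k ∈ Finset.Icc 1 n, X k ω)
    (hdecomp : ∀ n, ∀ ω, S n ω = N n ω + p * η n * M n ω)
    -- a.s. summability of the normalized conditional increment second moments
    (hsumN : ∀ᵐ ω ∂P, Summable (fun n : ℕ =>
      (1 / ((n : ℝ) ^ 2)) *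
        (P[(fun ω' => (N (n + 1) ω' - N n ω') ^ 2) | ℱ n]) ω))
    (hsumM : ∀ᵐ ω ∂P, Summable (fun n : ℕ =>
      (η n / (n : ℝ)) ^ 2 *
        (P[(fun ω' => (M (n + 1) ω' - M n ω') ^ 2) | ℱ n]) ω))
    -- (n/η_n) is eventually increasing to infinity
    (hmono : ∃ N₀ : ℕ, ∀ n ≥ N₀, (n : ℝ) / η n ≤ ((n + 1 : ℕ) : ℝ) / η (n + 1))
    (htop : Tendsto (fun n : ℕ => (n : ℝ) / η n) atTop atTop) :
    ∀ᵐ ω ∂P,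
      Tendsto (fun n : ℕ => N n ω / (n : ℝ)) atTop (nhds 0) ∧
      Tendsto (fun n : ℕ => η n * M n ω / (n : ℝ)) atTop (nhds 0) ∧
      Tendsto (fun n : ℕ => S n ω / (n : ℝ)) atTop (nhds 0) := by
  -- apply the martingale strong-law lemma to N with coefficients 1/n
  have hsumN' : ∀ᵐ ω ∂P, Summable (fun n : ℕ => ((n : ℝ))⁻¹ ^ 2 *
      (P[(fun ω' => (N (n + 1) ω' - N n ω') ^ 2) | ℱ n]) ω) := by
    filter_upwards [hsumN] with ω hω
    refine hω.congr fun n => ?_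
    simp [inv_pow, one_div]
  have hNkey := my_mart_conv P ℱ N hNmart hNL2 (fun n => ((n : ℝ))⁻¹) hsumN'
  have hMkey := my_mart_conv P ℱ M hMmart hML2 (fun n => η n / (n : ℝ)) hsumM
  obtain ⟨N₀, hN₀⟩ := hmono
  filter_upwards [hNkey, hMkey] with ω hNω hMω
  obtain ⟨L1, hL1⟩ := hNω
  obtain ⟨L2, hL2'⟩ := hMω
  -- the N part
  have kN := my_kronecker (fun n : ℕ => (n : ℝ)) (fun k => N (k + 1) ω - N k ω) L1 0
      (fun n _ => Nat.cast_le.mpr (Nat.le_succ n)) tendsto_natCast_atTop_atTop hL1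
  have kN' : Tendsto (fun n : ℕ => (N n ω - N 0 ω) / (n : ℝ)) atTop (nhds 0) :=
    kN.congr fun n => by rw [Finset.sum_range_sub (f := fun k => N k ω)]
  have hNlim : Tendsto (fun n : ℕ => N n ω / (n : ℝ)) atTop (nhds 0) := by
    have h2 := kN'.add (tendsto_const_div_atTop_nhds_zero_nat (N 0 ω))
    rw [add_zero] at h2
    refine h2.congr fun n => ?_
    rw [← add_div, sub_add_cancel]
  -- the M part
  have hL2'' : Tendsto (fun n => ∑ k ∈ Finset.range n,
      ((fun m : ℕ => (m : ℝ) / η m) k)⁻¹ * (M (k + 1) ω - M k ω)) atTop (nhds L2) := by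
    refine hL2'.congr fun n => Finset.sum_congr rfl fun k _ => ?_
    rw [inv_div]
  have kM := my_kronecker (fun n : ℕ => (n : ℝ) / η n) (fun k => M (k + 1) ω - M k ω) L2 N₀
      (fun n hn => hN₀ n hn) htop hL2''
  have kM' : Tendsto (fun n : ℕ => (M n ω - M 0 ω) / ((n : ℝ) / η n)) atTop (nhds 0) :=
    kM.congr fun n => by rw [Finset.sum_range_sub (f := fun k => M k ω)]
  have hconstM : Tendsto (fun n : ℕ => M 0 ω / ((n : ℝ) / η n)) atTop (nhds 0) := by
    have hinv : Tendsto (fun n : ℕ => ((n : ℝ) / η n)⁻¹) atTop (nhds 0) :=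
      htop.inv_tendsto_atTop
    have h3 := hinv.const_mul (M 0 ω)
    rw [mul_zero] at h3
    refine h3.congr fun n => ?_
    exact (div_eq_mul_inv (M 0 ω) _).symm
  have hMBlim : Tendsto (fun n : ℕ => M n ω / ((n : ℝ) / η n)) atTop (nhds 0) := by
    have h4 := kM'.add hconstM
    rw [add_zero] at h4
    refine h4.congr fun n => ?_
    rw [← add_div, sub_add_cancel]
  have hMlim : Tendsto (fun n : ℕ => η n * M n ω / (n : ℝ)) atTop (nhds 0) := by
    refine hMBlim.congr fun n => ?_
    rw [div_div_eq_mul_div, mul_comm (M n ω) (η n)]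
  -- the S part
  have hSlim : Tendsto (fun n : ℕ => S n ω / (n : ℝ)) atTop (nhds 0) := by
    have h5 := hNlim.add (hMlim.const_mul p)
    rw [mul_zero, add_zero] at h5
    refine h5.congr fun n => ?_
    rw [hdecomp n ω]
    ring
  exact ⟨hNlim, hMlim, hSlim⟩
end
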